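/- Let k ≥ 3, q ≥ 1, π ∈ 𝕊_{k−1}, and let C = {a₁ < a₂ < ⋯ < a_t} ⊆ {1,…,k} be an independent set of vertices of the graph G_π. Define D : W^π_{k,q} → ℤ^t by D(x) = (x_{a₁} − x_{a₁−1} − ε_{a₁}(π), …, x_{a_t} − x_{a_t−1} − ε_{a_t}(π)), with conventions x₀ = 0 and x_k = q−1. Then for any vector d = (d₁,…,d_t) of nonnegative integers with d₁ + ⋯ + d_t = m and m ≤ q − |S(π)| − 1, the number of x ∈ W^π_{k,q} with D(x) = d equals C(k+q−|S(π)|−t−2−m, k−t−1). -/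

import Mathlib

open Finset

attribute [local instance] Classical.propDecidable

noncomputable section

/-- `π` is a permutation of `{1,…,k-1}` given in one-line notation
(`π p` is the entry at position `p`), normalized to `0` outside `[1,k-1]`. -/
def OneLine (k : ℕ) (π : ℕ → ℕ) : Prop :=
  Set.BijOn π (Set.Icc 1 (k - 1)) (Set.Icc 1 (k - 1)) ∧
    ∀ p, p ∉ Set.Icc 1 (k - 1) → π p = 0

/-- The set `S(π)` of adjacent inversions of `π`:
those `i ∈ [1,k-2]` such that `i+1` appears before `i` in `π`. -/
def adjInvF (k : ℕ) (π : ℕ → ℕ) : Finset ℕ :=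
  (Finset.Icc 1 (k - 2)).filter fun i =>
    ∃ p ∈ Finset.Icc 1 (k - 1), ∃ r ∈ Finset.Icc 1 (k - 1),
      p < r ∧ π p = i + 1 ∧ π r = i

/-- `W^π_{k,q}`: weakly increasing `(k-1)`-tuples with entries in `[0,q-1]`
that are strictly increasing at every adjacent inversion of `π`
(vectors are functions `ℕ → ℕ` supported on `[1,k-1]`). -/
def W (k q : ℕ) (π : ℕ → ℕ) : Set (ℕ → ℕ) :=
  {v | (∀ i, i ∉ Finset.Icc 1 (k - 1) → v i = 0) ∧
       (∀ i ∈ Finset.Icc 1 (k - 1), v i ≤ q - 1) ∧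
       (∀ i, 1 ≤ i → i + 1 ≤ k - 1 → v i ≤ v (i + 1)) ∧
       (∀ i ∈ adjInvF k π, v i < v (i + 1))}

/-- `x + e_{π_a} + e_{π_{a+1}} + ⋯ + e_{π_{b-1}}`. -/
def shift (π : ℕ → ℕ) (a b : ℕ) (x : ℕ → ℕ) : ℕ → ℕ :=
  fun i => x i + if i ∈ (Finset.Icc a (b - 1)).image π then 1 else 0

/-- Adjacency in the graph `G^π_{k,q}`: one vertex is obtained from the other
by adding `e_{π_a} + ⋯ + e_{π_{b-1}}` for some `1 ≤ a < b ≤ k`. -/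
def AdjRel (k : ℕ) (π : ℕ → ℕ) (x y : ℕ → ℕ) : Prop :=
  ∃ a b, 1 ≤ a ∧ a < b ∧ b ≤ k ∧ (y = shift π a b x ∨ x = shift π a b y)

/-- The number of maximal blocks of consecutive integers of a finite set `T ⊆ ℕ`. -/
def numBlocks (T : Finset ℕ) : ℕ := (T.filter fun t => t + 1 ∉ T).card

/-- `cs_i(π)`: the number of pairs `1 ≤ a < b ≤ k` such that
`T_{a,b} = {π_a,…,π_{b-1}}` decomposes into exactly `i` maximal blocks
of consecutive integers. -/
def cs (k : ℕ) (π : ℕ → ℕ) (i : ℕ) : ℕ :=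
  ((Finset.Icc 1 k ×ˢ Finset.Icc 1 k).filter fun p =>
    p.1 < p.2 ∧ numBlocks ((Finset.Icc p.1 (p.2 - 1)).image π) = i).card

/-- For `i < j`, `{i,j}` is an edge of `G_π` iff `{i,i+1,…,j-1}` occurs as
a set of consecutive entries of `π`. -/
def GpiEdge (k : ℕ) (π : ℕ → ℕ) (i j : ℕ) : Prop :=
  ∃ a, 1 ≤ a ∧ a + (j - i) ≤ k ∧
    (Finset.Icc a (a + (j - i) - 1)).image π = Finset.Icc i (j - 1)

/-- Unordered adjacency in `G_π`. -/
def GpiAdjU (k : ℕ) (π : ℕ → ℕ) (i j : ℕ) : Prop :=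
  (i < j ∧ GpiEdge k π i j) ∨ (j < i ∧ GpiEdge k π j i)

/-- The position of the value `v` in the one-line notation of `π`. -/
def posOf (k : ℕ) (π : ℕ → ℕ) (v : ℕ) : ℕ :=
  if h : ((Finset.Icc 1 (k - 1)).filter fun t => π t = v).Nonempty then
    ((Finset.Icc 1 (k - 1)).filter fun t => π t = v).min' h
  else 0

/-- The rotation `r` on one-line permutations: if `π = π₁…π_{t-1}(k-1)π_{t+1}…π_{k-1}`,
then `r(π) = (π_{t+1}+1)…(π_{k-1}+1) 1 (π₁+1)…(π_{t-1}+1)`. -/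
def rot (k : ℕ) (π : ℕ → ℕ) : ℕ → ℕ := fun p =>
  if p ∉ Finset.Icc 1 (k - 1) then 0
  else if p < k - posOf k π (k - 1) then π (posOf k π (k - 1) + p) + 1
  else if p = k - posOf k π (k - 1) then 1
  else π (p - (k - posOf k π (k - 1))) + 1

/-- The reflection `s` on one-line permutations: if `π = π₁…π_{i-1} 1 π_{i+1}…π_{k-1}`,
then `s(π) = (k+1-π_{i-1})…(k+1-π₁) 1 (k+1-π_{k-1})…(k+1-π_{i+1})`. -/
def srefl (k : ℕ) (π : ℕ → ℕ) : ℕ → ℕ := fun p =>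
  if p ∉ Finset.Icc 1 (k - 1) then 0
  else if p < posOf k π 1 then k + 1 - π (posOf k π 1 - p)
  else if p = posOf k π 1 then 1
  else k + 1 - π (k + posOf k π 1 - p)

/-- The rotation `ρ` of the vertex set `{1,…,k}`. -/
def rotV (k i : ℕ) : ℕ := if i < k then i + 1 else 1

/-- The reflection `σ` of the vertex set `{1,…,k}`. -/
def sreflV (k i : ℕ) : ℕ := if i = 1 then 1 else k + 2 - i

/-- The maximal sorted family `(S₁,…,S_k)` associated with `σ`, `0`-indexed:
`sortedFam k σ (i-1) = S_i`. -/
def sortedFam (k : ℕ) (σ : ℕ → ℕ) : ℕ → Finset ℕ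
  | 0 => insert 1 ((adjInvF k σ).image (· + 1))
  | j + 1 => insert (σ (j + 1) + 1) ((sortedFam k σ j).erase (σ (j + 1)))

/-- `ear(π)`. -/
def ear (k : ℕ) (π : ℕ → ℕ) : ℕ :=
  ((Finset.Icc 1 (k - 2)).filter fun i => π (i + 1) = π i + 1 ∨ π i = π (i + 1) + 1).card
    + (({1, k - 1} : Finset ℕ) ∩ ({π 1, π (k - 1)} : Finset ℕ)).card

/-- `ε_i(π) = 1` if `i-1 ∈ S(π)` and `0` otherwise. -/
def eps (k : ℕ) (π : ℕ → ℕ) (i : ℕ) : ℕ := if i - 1 ∈ adjInvF k π then 1 else 0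

/-- Extension of a vector with the conventions `x_k = q-1` (`x₀ = 0` holds by
the normalization of vectors in `W^π_{k,q}`). -/
def xext (k q : ℕ) (x : ℕ → ℕ) (i : ℕ) : ℕ := if i = k then q - 1 else x i

/-- The label list `L^π(x) = {i ∈ [1,k] : x_{i-1} < x_i - ε_i(π)}`. -/
def labels (k q : ℕ) (π : ℕ → ℕ) (x : ℕ → ℕ) : Finset ℕ :=
  (Finset.Icc 1 k).filter fun i => xext k q x (i - 1) + eps k π i < xext k q x i

/-- A Sperner labeling of `G^π_{k,q}`. -/
def IsSperner (k q : ℕ) (π : ℕ → ℕ) (f : (ℕ → ℕ) → ℕ) : Prop :=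
  (∀ x ∈ W k q π, f x = 0 ∨ f x ∈ labels k q π x) ∧
  (∀ x ∈ W k q π, ∀ y ∈ W k q π, AdjRel k π x y → f x = f y ∨ f x = 0 ∨ f y = 0)

/-- The entry `w` appears between the entries `u` and `v` in `π`. -/
def Between (k : ℕ) (π : ℕ → ℕ) (u v w : ℕ) : Prop :=
  (posOf k π u < posOf k π w ∧ posOf k π w < posOf k π v) ∨
  (posOf k π v < posOf k π w ∧ posOf k π w < posOf k π u)

/-- A good set of colors for `π`. -/
def GoodSet (k : ℕ) (π : ℕ → ℕ) (C : Finset ℕ) : Prop :=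
  C ⊆ Finset.Icc 1 k ∧
  (∀ i ∈ C, ∀ j ∈ C, i ≠ j → ¬ GpiAdjU k π i j) ∧
  (∀ a ∈ C, ∀ b ∈ C, 1 < a → a < b → b < k →
      ((Between k π (a - 1) b a ∨ Between k π (a - 1) b (b - 1)) ∧
       (Between k π (b - 1) a (a - 1) ∨ Between k π (b - 1) a b))) ∧
  (1 ∈ C → ∀ b ∈ C, b ≠ 1 → Between k π 1 (b - 1) b) ∧
  (k ∈ C → ∀ b ∈ C, b ≠ k → Between k π b (k - 1) (b - 1))

/-- `x_a - x_{a-1} - ε_a(π)`, the `a`-th coordinate of the distance map `D`. -/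
def dval (k q : ℕ) (π : ℕ → ℕ) (x : ℕ → ℕ) (a : ℕ) : ℕ :=
  xext k q x a - xext k q x (a - 1) - eps k π a

/-- The distance coloring determined by a set of colors `C`:
`x` gets color `a ∈ C` if `dval x a` is the unique maximum of `dval x` on `C`,
and `0` otherwise. -/
def dcol (k q : ℕ) (π : ℕ → ℕ) (C : Finset ℕ) (x : ℕ → ℕ) : ℕ :=
  if h : ∃ a ∈ C, ∀ b ∈ C, b ≠ a → dval k q π x b < dval k q π x a then h.choose else 0


-- ===== auxiliary lemmas =====

lemma adjInvF_subset (k : ℕ) (π : ℕ → ℕ) : adjInvF k π ⊆ Finset.Icc 1 (k - 2) := by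
  intro i h
  simp only [adjInvF, Finset.mem_filter] at h
  exact h.1

lemma sum_antidiagonal_multichoose (c n : ℕ) :
    ∑ p ∈ Finset.HasAntidiagonal.antidiagonal n, Nat.multichoose c p.2 = Nat.multichoose (c + 1) n := by
  induction n with
  | zero =>
    rw [Finset.Nat.antidiagonal_zero, Finset.sum_singleton, Nat.multichoose_zero_right,
      Nat.multichoose_zero_right]
  | succ n ih =>
    rw [Finset.Nat.antidiagonal_succ, Finset.sum_cons, Finset.sum_map]
    simp only [Function.Embedding.coe_prodMap, Function.Embedding.coeFn_mk,
      Function.Embedding.refl_apply, Prod.map_snd]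
    rw [ih, Nat.multichoose_succ_succ]

lemma card_piAntidiag (s : Finset ℕ) (n : ℕ) :
    (Finset.piAntidiag s n).card = Nat.multichoose s.card n := by
  induction s using Finset.cons_induction generalizing n with
  | empty =>
    rw [Finset.piAntidiag_empty]
    cases n with
    | zero => simp
    | succ n => simp [Nat.multichoose_zero_succ]
  | cons i s hi ih =>
    rw [Finset.piAntidiag_cons, Finset.card_disjiUnion]
    simp only [Finset.card_map, ih]
    rw [Finset.card_cons]
    exact sum_antidiagonal_multichoose _ _

lemma eps_one (k : ℕ) (π : ℕ → ℕ) : eps k π 1 = 0 := by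
  have h : (1 : ℕ) - 1 ∉ adjInvF k π := by
    intro h
    have h2 := Finset.mem_Icc.mp (adjInvF_subset k π h)
    omega
  simp only [eps, if_neg h]

lemma eps_k (k : ℕ) (hk : 3 ≤ k) (π : ℕ → ℕ) : eps k π k = 0 := by
  have h : k - 1 ∉ adjInvF k π := by
    intro h
    have h2 := Finset.mem_Icc.mp (adjInvF_subset k π h)
    omega
  simp only [eps, if_neg h]

lemma step_le {k q : ℕ} (hk : 3 ≤ k) {π x : ℕ → ℕ} (hx : x ∈ W k q π)
    {a : ℕ} (ha1 : 1 ≤ a) (hak : a ≤ k) :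
    xext k q x (a - 1) + eps k π a ≤ xext k q x a := by
  simp only [W, Set.mem_setOf_eq] at hx
  obtain ⟨hx0, hx1, hx2, hx3⟩ := hx
  by_cases hak' : a = k
  · rw [hak']
    have h1 : eps k π k = 0 := eps_k k hk π
    have h2 : xext k q x k = q - 1 := by simp [xext]
    have h3 : xext k q x (k - 1) = x (k - 1) := by
      simp only [xext]; rw [if_neg (by omega)]
    have h4 : x (k - 1) ≤ q - 1 := hx1 (k - 1) (by rw [Finset.mem_Icc]; omega)
    omega
  by_cases ha1' : a = 1
  · subst ha1'
    have h1 : eps k π 1 = 0 := eps_one k π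
    have h2 : xext k q x (1 - 1) = x 0 := by
      simp only [xext]; rw [if_neg (by omega)]
    have h3 : x 0 = 0 := hx0 0 (by simp)
    omega
  · have e1 : xext k q x a = x a := by simp only [xext]; rw [if_neg (by omega)]
    have e2 : xext k q x (a - 1) = x (a - 1) := by
      simp only [xext]; rw [if_neg (by omega)]
    rw [e1, e2]
    by_cases hS : a - 1 ∈ adjInvF k π
    · have heps : eps k π a = 1 := by simp only [eps, if_pos hS]
      have h := hx3 (a - 1) hS
      rw [show a - 1 + 1 = a by omega] at h
      omega
    · have heps : eps k π a = 0 := by simp only [eps, if_neg hS]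
      have h := hx2 (a - 1) (by omega) (by omega)
      rw [show a - 1 + 1 = a by omega] at h
      omega

lemma xext_eq_sum {k q : ℕ} (hk : 3 ≤ k) {π x : ℕ → ℕ} (hx : x ∈ W k q π) :
    ∀ j, j ≤ k → xext k q x j = ∑ a ∈ Finset.Icc 1 j, (eps k π a + dval k q π x a) := by
  intro j
  induction j with
  | zero =>
    intro _
    have h3 : x 0 = 0 := hx.1 0 (by simp)
    rw [Finset.Icc_eq_empty (by omega), Finset.sum_empty]
    simp only [xext]
    rw [if_neg (by omega)]
    exact h3
  | succ j ih =>
    intro hjk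
    rw [Finset.sum_Icc_succ_top (by omega : (1:ℕ) ≤ j + 1), ← ih (by omega)]
    have hstep := step_le hk hx (a := j + 1) (by omega) hjk
    rw [show j + 1 - 1 = j from rfl] at hstep
    simp only [dval, Nat.add_sub_cancel]
    omega

lemma sum_eps (k : ℕ) (hk : 3 ≤ k) (π : ℕ → ℕ) :
    ∑ a ∈ Finset.Icc 1 k, eps k π a = (adjInvF k π).card := by
  have hsub : (adjInvF k π).image (· + 1) ⊆ Finset.Icc 1 k := by
    intro a ha
    rw [Finset.mem_image] at ha
    obtain ⟨b, hb, rfl⟩ := ha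
    have h2 := Finset.mem_Icc.mp (adjInvF_subset k π hb)
    rw [Finset.mem_Icc]
    omega
  have h1 : ∀ a ∈ Finset.Icc 1 k,
      eps k π a = if a ∈ (adjInvF k π).image (· + 1) then 1 else 0 := by
    intro a ha
    rw [Finset.mem_Icc] at ha
    by_cases h : a - 1 ∈ adjInvF k π
    · rw [eps, if_pos h, if_pos (Finset.mem_image.mpr ⟨a - 1, h, by omega⟩)]
    · rw [eps, if_neg h, if_neg]
      intro hc
      rw [Finset.mem_image] at hc
      obtain ⟨b, hb, rfl⟩ := hc
      simp only [Nat.add_sub_cancel] at h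
      exact h hb
  rw [Finset.sum_congr rfl h1, Finset.sum_ite_mem, Finset.inter_eq_right.mpr hsub,
    Finset.sum_const, smul_eq_mul, mul_one,
    Finset.card_image_of_injective _ (add_left_injective 1)]

lemma sum_dval {k q : ℕ} (hk : 3 ≤ k) (hq : 1 ≤ q) {π x : ℕ → ℕ} (hx : x ∈ W k q π) :
    (adjInvF k π).card + ∑ a ∈ Finset.Icc 1 k, dval k q π x a = q - 1 := by
  have h := xext_eq_sum hk hx k le_rfl
  rw [Finset.sum_add_distrib, sum_eps k hk π] at h
  have h2 : xext k q x k = q - 1 := by simp [xext]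
  omega

lemma edge_consec {k : ℕ} (hk : 3 ≤ k) {π : ℕ → ℕ} (hπ : OneLine k π)
    {i : ℕ} (h1 : 1 ≤ i) (h2 : i ≤ k - 1) : GpiEdge k π i (i + 1) := by
  have hi : i ∈ Set.Icc 1 (k - 1) := Set.mem_Icc.mpr ⟨h1, h2⟩
  obtain ⟨a, ha, hπa⟩ := hπ.1.2.2 hi
  rw [Set.mem_Icc] at ha
  refine ⟨a, ha.1, by omega, ?_⟩
  rw [show a + (i + 1 - i) - 1 = a by omega, show i + 1 - 1 = i from rfl,
    Finset.Icc_self, Finset.Icc_self, Finset.image_singleton, hπa]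

lemma card_C_le {k : ℕ} (hk : 3 ≤ k) {π : ℕ → ℕ} (hπ : OneLine k π) {C : Finset ℕ}
    (hCsub : C ⊆ Finset.Icc 1 k)
    (hCind : ∀ i ∈ C, ∀ j ∈ C, i ≠ j → ¬ GpiAdjU k π i j) :
    C.card ≤ k - 2 := by
  have hnc : ∀ i ∈ C, i + 1 ∉ C := by
    intro i hi hic
    have h1 := Finset.mem_Icc.mp (hCsub hi)
    have h2 := Finset.mem_Icc.mp (hCsub hic)
    exact hCind i hi (i + 1) hic (by omega)
      (Or.inl ⟨by omega, edge_consec hk hπ h1.1 (by omega)⟩)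
  by_cases hk3 : k = 3
  · subst hk3
    by_contra hcon
    push_neg at hcon
    have h2 : 1 < C.card := by omega
    obtain ⟨a, ha, b, hb, hab⟩ := Finset.one_lt_card.mp h2
    have hedge13 : GpiEdge 3 π 1 3 := by
      refine ⟨1, le_rfl, by norm_num, ?_⟩
      show Finset.image π (Finset.Icc 1 2) = Finset.Icc 1 2
      have himg : π '' Set.Icc 1 2 = Set.Icc 1 2 := by
        have h := hπ.1.image_eq
        norm_num at h
        exact h
      apply Finset.coe_injective
      rw [Finset.coe_image, Finset.coe_Icc]
      exact himg
    have key : ∀ u v, u ∈ C → v ∈ C → u < v → False := by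
      intro u v hu hv huv
      have h1 := Finset.mem_Icc.mp (hCsub hu)
      have h2 := Finset.mem_Icc.mp (hCsub hv)
      by_cases hv1 : v = u + 1
      · exact hnc u hu (hv1 ▸ hv)
      · have hu1 : u = 1 := by omega
        have hv3 : v = 3 := by omega
        subst hu1; subst hv3
        exact hCind 1 hu 3 hv (by omega) (Or.inl ⟨by omega, hedge13⟩)
    rcases lt_or_gt_of_ne hab with h | h
    · exact key a b ha hb h
    · exact key b a hb ha h
  · have hdisj : Disjoint C (C.image (· + 1)) := by
      rw [Finset.disjoint_left]
      intro a ha hbm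
      rw [Finset.mem_image] at hbm
      obtain ⟨b, hbC, rfl⟩ := hbm
      exact hnc b hbC ha
    have hunion : C ∪ C.image (· + 1) ⊆ Finset.Icc 1 (k + 1) := by
      intro a ha
      rw [Finset.mem_union] at ha
      rw [Finset.mem_Icc]
      rcases ha with h | h
      · have := Finset.mem_Icc.mp (hCsub h); omega
      · rw [Finset.mem_image] at h
        obtain ⟨b, hb, rfl⟩ := h
        have := Finset.mem_Icc.mp (hCsub hb); omega
    have hcard := Finset.card_le_card hunion
    rw [Finset.card_union_of_disjoint hdisj,
      Finset.card_image_of_injective _ (add_left_injective 1), Nat.card_Icc] at hcard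
    omega

theorem stmt16 (k q : ℕ) (hk : 3 ≤ k) (hq : 1 ≤ q) (π : ℕ → ℕ) (hπ : OneLine k π)
    (C : Finset ℕ) (hCsub : C ⊆ Finset.Icc 1 k)
    (hCind : ∀ i ∈ C, ∀ j ∈ C, i ≠ j → ¬ GpiAdjU k π i j)
    (d : ℕ → ℕ) (m : ℕ) (hd : ∑ a ∈ C, d a = m)
    (hm : m ≤ q - (adjInvF k π).card - 1) :
    {x | x ∈ W k q π ∧ ∀ a ∈ C, dval k q π x a = d a}.ncard
      = Nat.choose (k + q - (adjInvF k π).card - C.card - 2 - m) (k - C.card - 1) := by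
  classical
  set s := (adjInvF k π).card with hs
  set t := C.card with ht
  have hsk : s ≤ k - 2 := by
    have h := Finset.card_le_card (adjInvF_subset k π)
    rw [Nat.card_Icc] at h
    omega
  have htk : t ≤ k - 2 := card_C_le hk hπ hCsub hCind
  by_cases hqs : s + 1 ≤ q
  · -- main case
    have hmq : s + m + 1 ≤ q := by omega
    set n := q - s - 1 - m with hn
    set B := Finset.Icc 1 k \ C with hB
    have hBcard : B.card = k - t := by
      rw [hB, Finset.card_sdiff_of_subset hCsub, Nat.card_Icc, ht]
      omega
    set Φ : (ℕ → ℕ) → (ℕ → ℕ) := fun x a => if a ∈ B then dval k q π x a else 0 with hF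
    have hmap : ∀ x ∈ {x | x ∈ W k q π ∧ ∀ a ∈ C, dval k q π x a = d a},
        Φ x ∈ (Finset.piAntidiag B n : Set (ℕ → ℕ)) := by
      rintro x ⟨hxW, hxd⟩
      rw [Finset.mem_coe, Finset.mem_piAntidiag]
      constructor
      · have hsplit : ∑ a ∈ B, dval k q π x a + ∑ a ∈ C, dval k q π x a
            = ∑ a ∈ Finset.Icc 1 k, dval k q π x a := Finset.sum_sdiff hCsub
        have hsum := sum_dval hk hq hxW
        have hC : ∑ a ∈ C, dval k q π x a = m := by
          rw [Finset.sum_congr rfl hxd]; exact hd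
        have hBsum : B.sum (Φ x) = ∑ a ∈ B, dval k q π x a := by
          refine Finset.sum_congr rfl fun a ha => ?_
          simp only [hF]
          exact if_pos ha
        rw [← hs] at hsum
        omega
      · intro i hi
        by_contra hiB
        apply hi
        simp only [hF]
        exact if_neg hiB
    have hinj : Set.InjOn Φ {x | x ∈ W k q π ∧ ∀ a ∈ C, dval k q π x a = d a} := by
      rintro x ⟨hxW, hxd⟩ y ⟨hyW, hyd⟩ hxy
      have hdv : ∀ a, 1 ≤ a → a ≤ k → dval k q π x a = dval k q π y a := by
        intro a h1 h2
        by_cases hC : a ∈ C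
        · rw [hxd a hC, hyd a hC]
        · have hb : a ∈ B := by
            rw [hB, Finset.mem_sdiff, Finset.mem_Icc]
            exact ⟨⟨h1, h2⟩, hC⟩
          have h := congrFun hxy a
          simp only [hF] at h
          rwa [if_pos hb, if_pos hb] at h
      have hxe : ∀ j, j ≤ k → xext k q x j = xext k q y j := by
        intro j hj
        rw [xext_eq_sum hk hxW j hj, xext_eq_sum hk hyW j hj]
        refine Finset.sum_congr rfl fun a ha => ?_
        rw [Finset.mem_Icc] at ha
        rw [hdv a ha.1 (by omega)]
      funext i
      by_cases hi : i ∈ Finset.Icc 1 (k - 1)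
      · rw [Finset.mem_Icc] at hi
        have h1 := hxe i (by omega)
        simp only [xext] at h1
        rwa [if_neg (by omega), if_neg (by omega)] at h1
      · rw [hxW.1 i hi, hyW.1 i hi]
    have hsurj : ∀ e ∈ (Finset.piAntidiag B n : Set (ℕ → ℕ)),
        ∃ x ∈ {x | x ∈ W k q π ∧ ∀ a ∈ C, dval k q π x a = d a}, Φ x = e := by
      intro e he
      rw [Finset.mem_coe, Finset.mem_piAntidiag] at he
      obtain ⟨hesum, hesupp⟩ := he
      set δ : ℕ → ℕ := fun a => if a ∈ C then d a else e a with hδ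
      set g : ℕ → ℕ := fun i => ∑ a ∈ Finset.Icc 1 i, (eps k π a + δ a) with hg
      have hstepg : ∀ i : ℕ, g (i + 1) = g i + (eps k π (i + 1) + δ (i + 1)) := by
        intro i
        simp only [hg]
        exact Finset.sum_Icc_succ_top (by omega) _
      have hgmono : ∀ i j : ℕ, i ≤ j → g i ≤ g j := by
        intro i j hij
        simp only [hg]
        exact Finset.sum_le_sum_of_subset (Finset.Icc_subset_Icc_right hij)
      have hδsum : ∑ a ∈ Finset.Icc 1 k, δ a = m + n := by
        rw [← Finset.sum_sdiff hCsub, ← hB]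
        have h1 : ∑ a ∈ C, δ a = m := by
          rw [← hd]
          refine Finset.sum_congr rfl fun a ha => ?_
          simp only [hδ]
          exact if_pos ha
        have h2 : ∑ a ∈ B, δ a = n := by
          rw [← hesum]
          refine Finset.sum_congr rfl fun a ha => ?_
          rw [hB, Finset.mem_sdiff] at ha
          simp only [hδ]
          exact if_neg ha.2
        omega
      have hgk : g k = q - 1 := by
        have h : g k = ∑ a ∈ Finset.Icc 1 k, eps k π a + ∑ a ∈ Finset.Icc 1 k, δ a := by
          simp only [hg]
          exact Finset.sum_add_distrib
        rw [sum_eps k hk π, ← hs, hδsum] at h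
        omega
      set x : ℕ → ℕ := fun i => if i ∈ Finset.Icc 1 (k - 1) then g i else 0 with hx
      have hg0 : g 0 = 0 := by
        simp only [hg]
        rw [Finset.Icc_eq_empty (by omega), Finset.sum_empty]
      have hxg : ∀ i, i ≤ k → xext k q x i = g i := by
        intro i hi
        by_cases hik : i = k
        · rw [hik]
          have h2 : xext k q x k = q - 1 := by simp [xext]
          omega
        · by_cases hi0 : i = 0
          · subst hi0
            simp only [xext, hx]
            rw [if_neg (by omega), if_neg (by simp), hg0]
          · simp only [xext, hx]
            rw [if_neg (by omega), if_pos (by rw [Finset.mem_Icc]; omega)]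
      have hxmemW : x ∈ W k q π := by
        simp only [W, Set.mem_setOf_eq]
        refine ⟨?_, ?_, ?_, ?_⟩
        · intro i hi
          simp only [hx]
          rw [if_neg hi]
        · intro i hi
          simp only [hx]
          rw [if_pos hi]
          rw [Finset.mem_Icc] at hi
          have := hgmono i k (by omega)
          omega
        · intro i h1 h2
          simp only [hx]
          rw [if_pos (by rw [Finset.mem_Icc]; omega), if_pos (by rw [Finset.mem_Icc]; omega)]
          exact hgmono i (i + 1) (by omega)
        · intro i hiS
          have hi2 := adjInvF_subset k π hiS
          rw [Finset.mem_Icc] at hi2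
          simp only [hx]
          rw [if_pos (by rw [Finset.mem_Icc]; omega), if_pos (by rw [Finset.mem_Icc]; omega)]
          have h1 := hstepg i
          have heps1 : eps k π (i + 1) = 1 := by
            simp only [eps, Nat.add_sub_cancel]
            rw [if_pos hiS]
          omega
      have hdvalx : ∀ a, 1 ≤ a → a ≤ k → dval k q π x a = δ a := by
        intro a h1 h2
        have e1 : xext k q x a = g a := hxg a h2
        have e2 : xext k q x (a - 1) = g (a - 1) := hxg (a - 1) (by omega)
        have e3 : g a = g (a - 1) + (eps k π a + δ a) := by
          have h := hstepg (a - 1)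
          rwa [show a - 1 + 1 = a by omega] at h
        simp only [dval]
        omega
      refine ⟨x, ⟨hxmemW, ?_⟩, ?_⟩
      · intro a ha
        have h := hCsub ha
        rw [Finset.mem_Icc] at h
        rw [hdvalx a h.1 h.2]
        simp only [hδ]
        exact if_pos ha
      · funext a
        simp only [hF]
        by_cases haB : a ∈ B
        · rw [if_pos haB]
          have haB' := haB
          rw [hB, Finset.mem_sdiff, Finset.mem_Icc] at haB'
          rw [hdvalx a haB'.1.1 haB'.1.2]
          simp only [hδ]
          exact if_neg haB'.2
        · rw [if_neg haB]
          by_contra hne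
          exact haB (hesupp a fun h => hne h.symm)
    have hbij : Set.BijOn Φ {x | x ∈ W k q π ∧ ∀ a ∈ C, dval k q π x a = d a}
        (Finset.piAntidiag B n : Set (ℕ → ℕ)) := by
      refine ⟨hmap, hinj, ?_⟩
      intro e he
      obtain ⟨x, hx1, hx2⟩ := hsurj e he
      exact ⟨x, hx1, hx2⟩
    calc {x | x ∈ W k q π ∧ ∀ a ∈ C, dval k q π x a = d a}.ncard
        = (Φ '' {x | x ∈ W k q π ∧ ∀ a ∈ C, dval k q π x a = d a}).ncard :=
          (Set.ncard_image_of_injOn hinj).symm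
      _ = (Finset.piAntidiag B n : Set (ℕ → ℕ)).ncard := by rw [hbij.image_eq]
      _ = (Finset.piAntidiag B n).card := Set.ncard_coe_finset _
      _ = Nat.multichoose B.card n := card_piAntidiag _ _
      _ = Nat.choose (k + q - s - t - 2 - m) (k - t - 1) := by
          rw [hBcard, Nat.multichoose_eq]
          rw [show k - t + n - 1 = k + q - s - t - 2 - m by omega]
          rw [show n = (k + q - s - t - 2 - m) - (k - t - 1) by omega]
          exact Nat.choose_symm (by omega)
  · -- degenerate case : q ≤ s, the set is empty and the binomial vanishes
    have hempty : {x | x ∈ W k q π ∧ ∀ a ∈ C, dval k q π x a = d a} = ∅ := by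
      ext x
      simp only [Set.mem_setOf_eq, Set.mem_empty_iff_false, iff_false, not_and]
      intro hxW
      have h := sum_dval hk hq hxW
      rw [← hs] at h
      omega
    rw [hempty, Set.ncard_empty]
    exact (Nat.choose_eq_zero_of_lt (by omega)).symm


end
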